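/- Let N ≥ 5 and k ≥ 2 be integers and let λ, g be real numbers with g ≠ 0. Let Q be the k × k real matrix with entries Q₁₁ = 3λ, Q_ii = 2λ for 2 ≤ i ≤ k-1, Q_kk = (3N-8)λ/(N-4), Q_{i,i+1} = -g and Q_{i+1,i} = -λ²/g for 1 ≤ i ≤ k-1, and all other entries 0. Then det Q = ((4Nk - 8k - 4)/(N-4)) λ^k; in particular det Q ≠ 0 whenever λ ≠ 0. -/

import Mathlib

noncomputable def triMat (b c : ℝ) (d : ℕ → ℝ) (n : ℕ) : Matrix (Fin n) (Fin n) ℝ :=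
  Matrix.of fun i j =>
    if (i : ℕ) = (j : ℕ) then d i
    else if (j : ℕ) = (i : ℕ) + 1 then b
    else if (i : ℕ) = (j : ℕ) + 1 then c
    else 0

noncomputable def triF (b c : ℝ) : ℕ → (ℕ → ℝ) → ℝ
  | 0, _ => 1
  | 1, d => d 0
  | (n+2), d => d 0 * triF b c (n+1) (fun i => d (i+1)) - b * c * triF b c n (fun i => d (i+2))

lemma triMat_submatrix (b c : ℝ) (d : ℕ → ℝ) {n m : ℕ} (ρ σ : Fin m → Fin n) (s : ℕ)
    (hρ : ∀ i, (ρ i : ℕ) = i + s) (hσ : ∀ j, (σ j : ℕ) = j + s) :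
    (triMat b c d n).submatrix ρ σ = triMat b c (fun i => d (i + s)) m := by
  ext i j
  simp only [triMat, Matrix.submatrix_apply, Matrix.of_apply, hρ, hσ]
  have h1 : ((i:ℕ)+s = (j:ℕ)+s) ↔ ((i:ℕ)=(j:ℕ)) := by omega
  have h2 : ((j:ℕ)+s = (i:ℕ)+s+1) ↔ ((j:ℕ)=(i:ℕ)+1) := by omega
  have h3 : ((i:ℕ)+s = (j:ℕ)+s+1) ↔ ((i:ℕ)=(j:ℕ)+1) := by omega
  rw [if_congr h1 rfl (if_congr h2 rfl (if_congr h3 rfl rfl))]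

lemma succAbove_one_succ {n : ℕ} (j : Fin n) :
    (((Fin.succ (0 : Fin (n+1))).succAbove (Fin.succ j)) : ℕ) = (j:ℕ) + 2 := by
  rw [Fin.succAbove_of_le_castSucc _ _
    (by rw [Fin.le_def, Fin.coe_castSucc, Fin.val_succ, Fin.val_succ, Fin.val_zero]; omega)]
  rw [Fin.val_succ, Fin.val_succ]

lemma succAbove_one_zero {n : ℕ} :
    (((Fin.succ (0 : Fin (n+1))).succAbove (0 : Fin (n+1))) : ℕ) = 0 := by
  rw [Fin.succAbove_of_castSucc_lt _ _
    (by rw [Fin.lt_def, Fin.coe_castSucc, Fin.val_succ]; simp)]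
  simp

theorem det_tri (b c : ℝ) : ∀ (n : ℕ) (d : ℕ → ℝ), (triMat b c d n).det = triF b c n d
  | 0, d => by simp [triF]
  | 1, d => by simp [triMat, triF]
  | (n+2), d => by
    set M := triMat b c d (n+2) with hM
    have e0 : M 0 0 = d 0 := by simp [hM, triMat]
    have e1 : M 0 (Fin.succ 0) = b := by
      simp only [hM, triMat, Matrix.of_apply, Fin.val_succ, Fin.val_zero]
      norm_num
    have etail : ∀ j : Fin n, M 0 (Fin.succ (Fin.succ j)) = 0 := by
      intro j
      simp only [hM, triMat, Matrix.of_apply, Fin.val_succ, Fin.val_zero]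
      simp only [show ¬ (0 = (j:ℕ)+1+1) by omega, show ¬ ((j:ℕ)+1+1 = 0+1) by omega,
        show ¬ (0 = (j:ℕ)+1+1+1) by omega, ↓reduceIte]
    have sub0 : M.submatrix Fin.succ ((0 : Fin (n+2)).succAbove)
        = triMat b c (fun i => d (i + 1)) (n+1) := by
      apply triMat_submatrix b c d _ _ 1 (fun i => Fin.val_succ i)
      intro j; rw [Fin.zero_succAbove, Fin.val_succ]
    set B := M.submatrix Fin.succ ((Fin.succ (0 : Fin (n+1))).succAbove) with hB
    have b00 : B 0 0 = c := by
      simp only [hB, Matrix.submatrix_apply, hM, triMat, Matrix.of_apply,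
        Fin.val_succ, Fin.val_zero, succAbove_one_zero]
      norm_num
    have btail : ∀ i : Fin n, B (Fin.succ i) 0 = 0 := by
      intro i
      simp only [hB, Matrix.submatrix_apply, hM, triMat, Matrix.of_apply,
        Fin.val_succ, Fin.val_zero, succAbove_one_zero]
      rw [if_neg (by omega), if_neg (by omega), if_neg (by omega)]
    have subB : B.submatrix ((0 : Fin (n+1)).succAbove) Fin.succ
        = triMat b c (fun i => d (i + 2)) n := by
      rw [hB, Matrix.submatrix_submatrix, hM]
      apply triMat_submatrix b c d _ _ 2
      · intro i
        simp only [Function.comp_apply, Fin.zero_succAbove, Fin.val_succ]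
      · intro j
        simp only [Function.comp_apply, succAbove_one_succ]
    have hBdet : B.det = c * triF b c n (fun i => d (i + 2)) := by
      rw [Matrix.det_succ_column_zero, Fin.sum_univ_succ]
      simp only [btail, zero_mul, mul_zero, Finset.sum_const_zero, add_zero,
        Fin.val_zero, pow_zero, one_mul, b00, subB, det_tri b c n]
    rw [Matrix.det_succ_row_zero, Fin.sum_univ_succ, Fin.sum_univ_succ]
    simp only [etail, zero_mul, mul_zero, Finset.sum_const_zero, add_zero,
      e0, e1, sub0, hBdet, det_tri b c (n+1), Fin.val_zero, Fin.val_succ,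
      pow_zero, pow_succ, pow_zero, one_mul]
    rw [show (M.submatrix Fin.succ (Fin.succ (0 : Fin (n+1))).succAbove).det = B.det from rfl, hBdet]
    show _ = triF b c (n+2) d
    rw [triF]
    ring

theorem triE (b c lam a : ℝ) (hbc : b * c = lam^2) :
    ∀ m : ℕ, triF b c (m+1) (fun i => if i + 1 = m + 1 then a else 2*lam)
      = ((m:ℝ)+1)*a*lam^m - (m:ℝ)*lam^(m+1)
  | 0 => by simp [triF]
  | 1 => by
      show triF b c (0+2) _ = _
      rw [triF]
      simp [triF, hbc]
      ring
  | (m+2) => by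
      have h1 := triE b c lam a hbc (m+1)
      have h2 := triE b c lam a hbc m
      show triF b c (m+1+2) _ = _
      rw [triF]
      have e0 : (if 0 + 1 = m + 2 + 1 then a else 2*lam) = 2*lam := by
        rw [if_neg (by omega)]
      have es1 : (fun i => if i + 1 + 1 = m + 2 + 1 then a else 2*lam)
          = (fun i => if i + 1 = m + 1 + 1 then a else 2*lam) := by
        funext i
        by_cases h : i + 1 = m + 1 + 1
        · rw [if_pos (by omega), if_pos h]
        · rw [if_neg (by omega), if_neg h]
      have es2 : (fun i => if i + 2 + 1 = m + 2 + 1 then a else 2*lam)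
          = (fun i => if i + 1 = m + 1 then a else 2*lam) := by
        funext i
        by_cases h : i + 1 = m + 1
        · rw [if_pos (by omega), if_pos h]
        · rw [if_neg (by omega), if_neg h]
      rw [e0, es1, es2, h1, h2, hbc]
      push_cast
      ring




/-- The determinant of the tridiagonal `k × k` matrix `Q` with diagonal
`(3λ, 2λ, …, 2λ, (3N-8)λ/(N-4))`, superdiagonal entries `-g` and subdiagonal entries
`-λ²/g` equals `((4Nk - 8k - 4)/(N-4)) λ^k`; in particular `det Q ≠ 0` whenever `λ ≠ 0`. -/
theorem statement11 (N k : ℕ) (hN : 5 ≤ N) (hk : 2 ≤ k) (lam g : ℝ) (hg : g ≠ 0) :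
    (Matrix.of fun i j : Fin k =>
      if i = j then
        (if (i : ℕ) = 0 then 3 * lam
         else if (i : ℕ) = k - 1 then (3 * (N : ℝ) - 8) * lam / ((N : ℝ) - 4)
         else 2 * lam)
      else if (j : ℕ) = (i : ℕ) + 1 then -g
      else if (i : ℕ) = (j : ℕ) + 1 then -lam ^ 2 / g
      else 0).det
      = (4 * (N : ℝ) * (k : ℝ) - 8 * (k : ℝ) - 4) / ((N : ℝ) - 4) * lam ^ k ∧
    (lam ≠ 0 →
      (Matrix.of fun i j : Fin k =>
        if i = j then
          (if (i : ℕ) = 0 then 3 * lam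
           else if (i : ℕ) = k - 1 then (3 * (N : ℝ) - 8) * lam / ((N : ℝ) - 4)
           else 2 * lam)
        else if (j : ℕ) = (i : ℕ) + 1 then -g
        else if (i : ℕ) = (j : ℕ) + 1 then -lam ^ 2 / g
        else 0).det ≠ 0) := by
  have hN4 : (N : ℝ) - 4 ≠ 0 := by
    have : (5 : ℝ) ≤ (N : ℝ) := by exact_mod_cast hN
    linarith
  set A : ℝ := (3 * (N : ℝ) - 8) * lam / ((N : ℝ) - 4) with hA
  set dmain : ℕ → ℝ := fun i => if i = 0 then 3 * lam else if i = k - 1 then A else 2 * lam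
    with hdmain
  have hMat : (Matrix.of fun i j : Fin k =>
      if i = j then
        (if (i : ℕ) = 0 then 3 * lam
         else if (i : ℕ) = k - 1 then (3 * (N : ℝ) - 8) * lam / ((N : ℝ) - 4)
         else 2 * lam)
      else if (j : ℕ) = (i : ℕ) + 1 then -g
      else if (i : ℕ) = (j : ℕ) + 1 then -lam ^ 2 / g
      else 0) = triMat (-g) (-lam ^ 2 / g) dmain k := by
    ext i j
    simp only [Matrix.of_apply, triMat, hdmain, Fin.ext_iff]
    rw [hA]
  have hbc : (-g) * (-lam ^ 2 / g) = lam ^ 2 := by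
    field_simp
  have hdet : (triMat (-g) (-lam ^ 2 / g) dmain k).det
      = (4 * (N : ℝ) * (k : ℝ) - 8 * (k : ℝ) - 4) / ((N : ℝ) - 4) * lam ^ k := by
    obtain ⟨j, rfl⟩ : ∃ j, k = j + 2 := ⟨k - 2, by omega⟩
    rw [det_tri, triF]
    have e0 : dmain 0 = 3 * lam := by simp [hdmain]
    have es1 : (fun i => dmain (i + 1)) = (fun i => if i + 1 = j + 1 then A else 2*lam) := by
      funext i
      simp only [hdmain]
      rw [if_neg (by omega)]
      by_cases h : i + 1 = j + 1
      · rw [if_pos (by omega), if_pos h]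
      · rw [if_neg (by omega), if_neg h]
    rw [e0, es1, triE _ _ _ _ hbc, hbc]
    rcases j with _ | t
    · have es2 : (fun i => dmain (i + 2)) = (fun _ => (2:ℝ)*lam) := by
        funext i
        simp only [hdmain]
        rw [if_neg (by omega), if_neg (by omega)]
      rw [es2]
      show 3 * lam * _ - _ * triF _ _ 0 _ = _
      rw [triF]
      push_cast
      rw [hA]
      field_simp
      ring
    · have es2 : (fun i => dmain (i + 2)) = (fun i => if i + 1 = t + 1 then A else 2*lam) := by
        funext i
        simp only [hdmain]
        rw [if_neg (by omega)]
        by_cases h : i + 1 = t + 1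
        · rw [if_pos (by omega), if_pos h]
        · rw [if_neg (by omega), if_neg h]
      rw [es2, triE _ _ _ _ hbc]
      push_cast
      rw [hA]
      field_simp
      ring
  rw [hMat, hdet]
  refine ⟨rfl, fun hlam => ?_⟩
  apply mul_ne_zero
  · apply div_ne_zero _ hN4
    have h5 : (5 : ℝ) ≤ (N : ℝ) := by exact_mod_cast hN
    have h2 : (2 : ℝ) ≤ (k : ℝ) := by exact_mod_cast hk
    nlinarith
  · exact pow_ne_zero _ hlam
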